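/- The Donsker–Varadhan representation: for probability measures P and Q on a measurable space with P absolutely continuous with respect to Q, the KL divergence satisfies D_KL(P‖Q) = sup over all measurable functions T (for which both expectations are finite) of E_P[T] − log(E_Q[e^T]). -/

import Mathlib

open MeasureTheory

section DVAux

open Real Filter
open scoped ENNReal

variable {Ω : Type*} [MeasurableSpace Ω] {μ ν : Measure Ω}

lemma dv_lintegral_inv_le [IsProbabilityMeasure μ] [IsProbabilityMeasure ν] (h : μ ≪ ν) :
    ∫⁻ x, (μ.rnDeriv ν x)⁻¹ ∂μ ≤ 1 := by
  rw [← lintegral_rnDeriv_mul (f := fun x => (μ.rnDeriv ν x)⁻¹) h (Measure.measurable_rnDeriv μ ν).inv.aemeasurable]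
  calc ∫⁻ x, μ.rnDeriv ν x * (μ.rnDeriv ν x)⁻¹ ∂ν ≤ ∫⁻ _, 1 ∂ν :=
        lintegral_mono fun x => ENNReal.mul_inv_le_one _
    _ = 1 := by simp

lemma dv_integrable_inv [IsProbabilityMeasure μ] [IsProbabilityMeasure ν] (h : μ ≪ ν) :
    Integrable (fun x => ((μ.rnDeriv ν x).toReal)⁻¹) μ := by
  refine ⟨(Measure.measurable_rnDeriv μ ν).ennreal_toReal.inv.aestronglyMeasurable, ?_⟩
  rw [hasFiniteIntegral_iff_norm]
  have hle : ∫⁻ x, ENNReal.ofReal ‖((μ.rnDeriv ν x).toReal)⁻¹‖ ∂μ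
      ≤ ∫⁻ x, (μ.rnDeriv ν x)⁻¹ ∂μ := by
    refine lintegral_mono fun x => ?_
    rw [Real.norm_eq_abs, abs_of_nonneg (by positivity), ← ENNReal.toReal_inv]
    exact ENNReal.ofReal_toReal_le
  exact lt_of_le_of_lt (hle.trans (dv_lintegral_inv_le h)) ENNReal.one_lt_top

lemma dv_integral_inv_le [IsProbabilityMeasure μ] [IsProbabilityMeasure ν] (h : μ ≪ ν) :
    ∫ x, ((μ.rnDeriv ν x).toReal)⁻¹ ∂μ ≤ 1 := by
  rw [integral_eq_lintegral_of_nonneg_ae (f := fun x => ((μ.rnDeriv ν x).toReal)⁻¹) (ae_of_all _ fun x => by positivity)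
    (Measure.measurable_rnDeriv μ ν).ennreal_toReal.inv.aestronglyMeasurable]
  have hle : ∫⁻ x, ENNReal.ofReal ((μ.rnDeriv ν x).toReal)⁻¹ ∂μ
      ≤ ∫⁻ x, (μ.rnDeriv ν x)⁻¹ ∂μ := by
    refine lintegral_mono fun x => ?_
    rw [← ENNReal.toReal_inv]
    exact ENNReal.ofReal_toReal_le
  calc (∫⁻ x, ENNReal.ofReal ((μ.rnDeriv ν x).toReal)⁻¹ ∂μ).toReal
      ≤ (1 : ℝ≥0∞).toReal :=
        ENNReal.toReal_mono (by simp) (hle.trans (dv_lintegral_inv_le h))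
    _ = 1 := by simp

/-- Nonnegativity of the KL divergence. -/
lemma dv_integral_llr_nonneg [IsProbabilityMeasure μ] [IsProbabilityMeasure ν] (h : μ ≪ ν)
    (h_int : Integrable (llr μ ν) μ) : 0 ≤ ∫ x, llr μ ν x ∂μ := by
  have key : ∫ x, -llr μ ν x ∂μ ≤ ∫ x, ((μ.rnDeriv ν x).toReal)⁻¹ - 1 ∂μ := by
    refine integral_mono_ae h_int.neg ((dv_integrable_inv h).sub (integrable_const 1)) ?_
    filter_upwards [Measure.rnDeriv_pos h, h.ae_le (Measure.rnDeriv_lt_top μ ν)] with x hpos hlt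
    have hf : 0 < (μ.rnDeriv ν x).toReal := ENNReal.toReal_pos hpos.ne' hlt.ne
    calc -llr μ ν x = Real.log ((μ.rnDeriv ν x).toReal)⁻¹ := by rw [llr, Real.log_inv]
      _ ≤ ((μ.rnDeriv ν x).toReal)⁻¹ - 1 := Real.log_le_sub_one_of_pos (by positivity)
  rw [integral_neg, integral_sub (dv_integrable_inv h) (integrable_const 1)] at key
  simp only [integral_const, measure_univ, probReal_univ, ENNReal.toReal_one, smul_eq_mul, one_mul, mul_one] at key
  have := dv_integral_inv_le h
  linarith

/-- Gibbs / variational inequality: each candidate value is at most the KL divergence. -/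
lemma dv_le_klDiv [IsProbabilityMeasure μ] [IsProbabilityMeasure ν] (h : μ ≪ ν)
    (h_int : Integrable (llr μ ν) μ) {T : Ω → ℝ} (hT1 : Integrable T μ) (hT2 : Integrable (fun x => Real.exp (T x)) ν) :
    ∫ x, T x ∂μ - Real.log (∫ x, Real.exp (T x) ∂ν) ≤ ∫ x, llr μ ν x ∂μ := by
  have : NeZero ν := ⟨IsProbabilityMeasure.ne_zero ν⟩
  have hprob : IsProbabilityMeasure (ν.tilted T) := isProbabilityMeasure_tilted hT2
  have hac : μ ≪ ν.tilted T := h.trans (absolutelyContinuous_tilted hT2)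
  have h0 := dv_integral_llr_nonneg hac (integrable_llr_tilted_right h hT1 h_int hT2)
  rw [integral_llr_tilted_right h hT1 hT2 h_int] at h0
  linarith

/-- Truncated approximations to the log-likelihood ratio. -/
noncomputable def dvT (μ ν : Measure Ω) (n : ℕ) (x : Ω) : ℝ :=
  min (Real.log ((μ.rnDeriv ν x).toReal + Real.exp (-(n : ℝ)))) n

lemma dvT_measurable (μ ν : Measure Ω) (n : ℕ) : Measurable (dvT μ ν n) :=
  ((Real.measurable_log.comp ((Measure.measurable_rnDeriv μ ν).ennreal_toReal.add
    measurable_const)).min measurable_const)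

lemma dvT_le (μ ν : Measure Ω) (n : ℕ) (x : Ω) : dvT μ ν n x ≤ n := min_le_right _ _

lemma neg_le_dvT (μ ν : Measure Ω) (n : ℕ) (x : Ω) : -(n : ℝ) ≤ dvT μ ν n x := by
  refine le_min ?_ (neg_le_self n.cast_nonneg)
  calc -(n : ℝ) = Real.log (Real.exp (-(n : ℝ))) := (Real.log_exp _).symm
    _ ≤ Real.log ((μ.rnDeriv ν x).toReal + Real.exp (-(n : ℝ))) :=
        Real.log_le_log (Real.exp_pos _) (le_add_of_nonneg_left ENNReal.toReal_nonneg)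

lemma abs_dvT_le (μ ν : Measure Ω) (n : ℕ) (x : Ω) : |dvT μ ν n x| ≤ n :=
  abs_le.2 ⟨neg_le_dvT μ ν n x, dvT_le μ ν n x⟩

lemma dvT_integrable (μ ν : Measure Ω) [IsProbabilityMeasure μ] (n : ℕ) :
    Integrable (dvT μ ν n) μ := by
  refine Integrable.mono' (integrable_const (n : ℝ))
    (dvT_measurable μ ν n).aestronglyMeasurable (ae_of_all _ fun x => ?_)
  simpa using abs_dvT_le μ ν n x

lemma exp_dvT_le (μ ν : Measure Ω) (n : ℕ) (x : Ω) :
    Real.exp (dvT μ ν n x) ≤ (μ.rnDeriv ν x).toReal + Real.exp (-(n : ℝ)) := by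
  calc Real.exp (dvT μ ν n x)
      ≤ Real.exp (Real.log ((μ.rnDeriv ν x).toReal + Real.exp (-(n : ℝ)))) :=
        Real.exp_le_exp.2 (min_le_left _ _)
    _ = (μ.rnDeriv ν x).toReal + Real.exp (-(n : ℝ)) :=
        Real.exp_log (by positivity)

lemma exp_dvT_le' (μ ν : Measure Ω) (n : ℕ) (x : Ω) :
    Real.exp (dvT μ ν n x) ≤ (μ.rnDeriv ν x).toReal + 1 :=
  (exp_dvT_le μ ν n x).trans (by
    have : Real.exp (-(n : ℝ)) ≤ 1 := Real.exp_le_one_iff.2 (by simp)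
    linarith)

lemma exp_dvT_integrable (μ ν : Measure Ω) [IsProbabilityMeasure ν] (n : ℕ) :
    Integrable (fun x => Real.exp (dvT μ ν n x)) ν := by
  refine Integrable.mono' (integrable_const (Real.exp (n : ℝ)))
    (Real.measurable_exp.comp (dvT_measurable μ ν n)).aestronglyMeasurable
    (ae_of_all _ fun x => ?_)
  rw [Real.norm_eq_abs, abs_of_pos (Real.exp_pos _)]
  exact Real.exp_le_exp.2 (dvT_le μ ν n x)

lemma integral_exp_dvT_le (μ ν : Measure Ω) [IsProbabilityMeasure μ] [IsProbabilityMeasure ν]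
    (h : μ ≪ ν) (n : ℕ) : ∫ x, Real.exp (dvT μ ν n x) ∂ν ≤ 2 := by
  have h1 : Integrable (fun x => (μ.rnDeriv ν x).toReal + 1) ν :=
    (Measure.integrable_toReal_rnDeriv).add (integrable_const 1)
  calc ∫ x, Real.exp (dvT μ ν n x) ∂ν ≤ ∫ x, ((μ.rnDeriv ν x).toReal + 1) ∂ν :=
        integral_mono (exp_dvT_integrable μ ν n) h1 (exp_dvT_le' μ ν n)
    _ = (μ Set.univ).toReal + 1 := by
        rw [integral_add (Measure.integrable_toReal_rnDeriv) (integrable_const 1),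
          Measure.integral_toReal_rnDeriv h]
        simp
    _ ≤ 2 := by simp only [measure_univ, ENNReal.toReal_one]; norm_num

/-- The negative part of the log-likelihood ratio is always integrable. -/
lemma dv_integrable_neg_part [IsProbabilityMeasure μ] [IsProbabilityMeasure ν] (h : μ ≪ ν) :
    Integrable (fun x => max (-llr μ ν x) 0) μ := by
  refine Integrable.mono' (dv_integrable_inv h)
    ((measurable_llr μ ν).neg.max measurable_const).aestronglyMeasurable ?_
  filter_upwards [Measure.rnDeriv_pos h, h.ae_le (Measure.rnDeriv_lt_top μ ν)] with x hpos hlt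
  have hf : 0 < (μ.rnDeriv ν x).toReal := ENNReal.toReal_pos hpos.ne' hlt.ne
  rw [Real.norm_eq_abs, abs_of_nonneg (le_max_right _ _)]
  rcases le_total (llr μ ν x) 0 with hc | hc
  · rw [max_eq_left (by linarith)]
    have : -llr μ ν x = Real.log ((μ.rnDeriv ν x).toReal)⁻¹ := by rw [llr, Real.log_inv]
    rw [this]
    have := Real.log_le_sub_one_of_pos (inv_pos.2 hf)
    linarith
  · rw [max_eq_right (by linarith)]
    positivity

lemma dvT_eq_of_le (μ ν : Measure Ω) {n : ℕ} {x : Ω}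
    (hn : (μ.rnDeriv ν x).toReal ≤ n) :
    dvT μ ν n x = Real.log ((μ.rnDeriv ν x).toReal + Real.exp (-(n : ℝ))) := by
  refine min_eq_left ?_
  have h1 : Real.exp (-(n : ℝ)) ≤ 1 := Real.exp_le_one_iff.2 (by simp)
  have h2 : (μ.rnDeriv ν x).toReal + Real.exp (-(n : ℝ)) ≤ Real.exp (n : ℝ) := by
    have := Real.add_one_le_exp (n : ℝ)
    linarith
  calc Real.log ((μ.rnDeriv ν x).toReal + Real.exp (-(n : ℝ)))
      ≤ Real.log (Real.exp (n : ℝ)) := Real.log_le_log (by positivity) h2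
    _ = n := Real.log_exp _

lemma dv_tendsto_log_add_exp {c : ℝ} (hc : 0 < c) :
    Tendsto (fun n : ℕ => Real.log (c + Real.exp (-(n : ℝ)))) atTop (nhds (Real.log c)) := by
  have h1 : Tendsto (fun n : ℕ => c + Real.exp (-(n : ℝ))) atTop (nhds (c + 0)) :=
    tendsto_const_nhds.add
      (Real.tendsto_exp_neg_atTop_nhds_zero.comp tendsto_natCast_atTop_atTop)
  rw [add_zero] at h1
  exact ((Real.continuousAt_log hc.ne').tendsto.comp h1 : _)

lemma dv_tendsto_dvT (μ ν : Measure Ω) {x : Ω} (hpos : 0 < (μ.rnDeriv ν x).toReal) :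
    Tendsto (fun n : ℕ => dvT μ ν n x) atTop (nhds (llr μ ν x)) := by
  refine (dv_tendsto_log_add_exp hpos).congr' ?_
  filter_upwards [eventually_ge_atTop ⌈(μ.rnDeriv ν x).toReal⌉₊] with n hn
  exact (dvT_eq_of_le μ ν ((Nat.le_ceil _).trans (by exact_mod_cast hn))).symm

lemma dv_tendsto_exp_dvT (μ ν : Measure Ω) (x : Ω) :
    Tendsto (fun n : ℕ => Real.exp (dvT μ ν n x)) atTop (nhds ((μ.rnDeriv ν x).toReal)) := by
  have h1 : Tendsto (fun n : ℕ => (μ.rnDeriv ν x).toReal + Real.exp (-(n : ℝ))) atTop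
      (nhds ((μ.rnDeriv ν x).toReal + 0)) :=
    tendsto_const_nhds.add
      (Real.tendsto_exp_neg_atTop_nhds_zero.comp tendsto_natCast_atTop_atTop)
  rw [add_zero] at h1
  refine h1.congr' ?_
  filter_upwards [eventually_ge_atTop ⌈(μ.rnDeriv ν x).toReal⌉₊] with n hn
  rw [dvT_eq_of_le μ ν ((Nat.le_ceil _).trans (by exact_mod_cast hn)), Real.exp_log (by positivity)]

lemma dv_abs_dvT_le_bound [IsProbabilityMeasure μ] [IsProbabilityMeasure ν] (h : μ ≪ ν) (n : ℕ) :
    ∀ᵐ x ∂μ, |dvT μ ν n x| ≤ Real.log 2 + |llr μ ν x| := by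
  filter_upwards [Measure.rnDeriv_pos h, h.ae_le (Measure.rnDeriv_lt_top μ ν)] with x hpos hlt
  set f := (μ.rnDeriv ν x).toReal with hf_def
  have hf : 0 < f := ENNReal.toReal_pos hpos.ne' hlt.ne
  have hlog2 : (0 : ℝ) ≤ Real.log 2 := Real.log_nonneg (by norm_num)
  have hexp1 : Real.exp (-(n : ℝ)) ≤ 1 := Real.exp_le_one_iff.2 (by simp)
  rw [abs_le]
  constructor
  · -- lower bound
    have h1 : min (llr μ ν x) 0 ≤ dvT μ ν n x := by
      refine le_min ?_ ?_
      · calc min (llr μ ν x) 0 ≤ llr μ ν x := min_le_left _ _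
          _ ≤ Real.log (f + Real.exp (-(n : ℝ))) :=
            Real.log_le_log hf (by have := Real.exp_pos (-(n : ℝ)); linarith)
      · exact (min_le_right _ _).trans n.cast_nonneg
    have h2 : -(Real.log 2 + |llr μ ν x|) ≤ min (llr μ ν x) 0 := by
      rcases le_total (llr μ ν x) 0 with hc | hc
      · rw [min_eq_left hc]
        have : |llr μ ν x| = -(llr μ ν x) := abs_of_nonpos hc
        linarith
      · rw [min_eq_right hc]
        have : 0 ≤ |llr μ ν x| := abs_nonneg _
        linarith
    linarith
  · -- upper bound
    have h1 : dvT μ ν n x ≤ Real.log (f + 1) :=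
      (min_le_left _ _).trans (Real.log_le_log (by positivity) (by linarith))
    have h2 : Real.log (f + 1) ≤ Real.log 2 + |llr μ ν x| := by
      rcases le_total f 1 with hc | hc
      · have : Real.log (f + 1) ≤ Real.log 2 := Real.log_le_log (by positivity) (by linarith)
        have := abs_nonneg (llr μ ν x)
        linarith
      · have hl : Real.log (f + 1) ≤ Real.log (2 * f) :=
          Real.log_le_log (by positivity) (by linarith)
        rw [Real.log_mul (by norm_num) (by linarith)] at hl
        have : llr μ ν x ≤ |llr μ ν x| := le_abs_self _
        have hllr : Real.log f = llr μ ν x := rfl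
        linarith
    linarith

lemma dv_tendsto_integral_dvT [IsProbabilityMeasure μ] [IsProbabilityMeasure ν] (h : μ ≪ ν)
    (h_int : Integrable (llr μ ν) μ) :
    Tendsto (fun n : ℕ => ∫ x, dvT μ ν n x ∂μ) atTop (nhds (∫ x, llr μ ν x ∂μ)) := by
  refine tendsto_integral_of_dominated_convergence (fun x => Real.log 2 + |llr μ ν x|)
    (fun n => (dvT_measurable μ ν n).aestronglyMeasurable)
    ((integrable_const _).add h_int.abs) ?_ ?_
  · intro n
    filter_upwards [dv_abs_dvT_le_bound h n] with x hx
    rwa [Real.norm_eq_abs]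
  · filter_upwards [Measure.rnDeriv_pos h, h.ae_le (Measure.rnDeriv_lt_top μ ν)] with x hpos hlt
    exact dv_tendsto_dvT μ ν (ENNReal.toReal_pos hpos.ne' hlt.ne)

lemma dv_tendsto_integral_exp_dvT [IsProbabilityMeasure μ] [IsProbabilityMeasure ν] (h : μ ≪ ν) :
    Tendsto (fun n : ℕ => ∫ x, Real.exp (dvT μ ν n x) ∂ν) atTop (nhds 1) := by
  have hlim : Tendsto (fun n : ℕ => ∫ x, Real.exp (dvT μ ν n x) ∂ν) atTop
      (nhds (∫ x, (μ.rnDeriv ν x).toReal ∂ν)) := by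
    refine tendsto_integral_of_dominated_convergence (fun x => (μ.rnDeriv ν x).toReal + 1)
      (fun n => (Real.measurable_exp.comp (dvT_measurable μ ν n)).aestronglyMeasurable)
      ((Measure.integrable_toReal_rnDeriv).add (integrable_const 1)) ?_
      (ae_of_all _ fun x => dv_tendsto_exp_dvT μ ν x)
    intro n
    refine ae_of_all _ fun x => ?_
    rw [Real.norm_eq_abs, abs_of_pos (Real.exp_pos _)]
    exact exp_dvT_le' μ ν n x
  rw [Measure.integral_toReal_rnDeriv h] at hlim
  simpa using hlim

lemma dv_lintegral_pos_part_eq_top [IsProbabilityMeasure μ] [IsProbabilityMeasure ν]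
    (h : μ ≪ ν) (h_int : ¬ Integrable (llr μ ν) μ) :
    ∫⁻ x, ENNReal.ofReal (max (llr μ ν x) 0) ∂μ = ∞ := by
  by_contra hfin
  have hpos_int : Integrable (fun x => max (llr μ ν x) 0) μ := by
    refine ⟨((measurable_llr μ ν).max measurable_const).aestronglyMeasurable, ?_⟩
    rw [hasFiniteIntegral_iff_norm]
    have heq : ∀ x, ENNReal.ofReal ‖max (llr μ ν x) 0‖
        = ENNReal.ofReal (max (llr μ ν x) 0) := fun x => by
      rw [Real.norm_eq_abs, abs_of_nonneg (le_max_right _ _)]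
    simp_rw [heq]
    exact lt_top_iff_ne_top.2 hfin
  refine h_int ((hpos_int.sub (dv_integrable_neg_part h)).congr
    (ae_of_all _ fun x => max_zero_sub_max_neg_zero_eq_self _))

lemma dv_iSup_lintegral {g : Ω → ℝ} (hg : Measurable g)  :
    (⨆ n : ℕ, ∫⁻ x, ENNReal.ofReal (min (g x) n) ∂μ) = ∫⁻ x, ENNReal.ofReal (g x) ∂μ := by
  rw [← lintegral_iSup (fun n => (hg.min measurable_const).ennreal_ofReal)
    (fun m n hmn x => ENNReal.ofReal_le_ofReal (min_le_min le_rfl (Nat.cast_le.2 hmn)))]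
  refine lintegral_congr fun x => ?_
  refine le_antisymm (iSup_le fun n => ENNReal.ofReal_le_ofReal (min_le_left _ _)) ?_
  refine le_iSup_of_le ⌈g x⌉₊ (le_of_eq ?_)
  rw [min_eq_left (Nat.le_ceil _)]

lemma dv_min_pos_integrable [IsProbabilityMeasure μ] (n : ℕ) :
    Integrable (fun x => min (max (llr μ ν x) 0) (n : ℝ)) μ := by
  refine Integrable.mono' (integrable_const (n : ℝ))
    (((measurable_llr μ ν).max measurable_const).min measurable_const).aestronglyMeasurable
    (ae_of_all _ fun x => ?_)
  rw [Real.norm_eq_abs, abs_of_nonneg (le_min (le_max_right _ _) n.cast_nonneg)]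
  exact min_le_right _ _

lemma dv_not_bddAbove [IsProbabilityMeasure μ] [IsProbabilityMeasure ν]
    (h : μ ≪ ν) (h_int : ¬ Integrable (llr μ ν) μ) :
    ¬ BddAbove { r : ℝ | ∃ T : Ω → ℝ, Measurable T ∧ Integrable T μ ∧
        Integrable (fun x => Real.exp (T x)) ν ∧
        r = ∫ x, T x ∂μ - Real.log (∫ x, Real.exp (T x) ∂ν) } := by
  have : NeZero ν := ⟨IsProbabilityMeasure.ne_zero ν⟩
  rintro ⟨b, hb⟩
  set C := ∫ x, max (-llr μ ν x) 0 ∂μ with hC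
  have key : ∀ n : ℕ, ∫ x, min (max (llr μ ν x) 0) (n : ℝ) ∂μ ≤ b + Real.log 2 + C := by
    intro n
    have hmem : (∫ x, dvT μ ν n x ∂μ - Real.log (∫ x, Real.exp (dvT μ ν n x) ∂ν)) ∈
        { r : ℝ | ∃ T : Ω → ℝ, Measurable T ∧ Integrable T μ ∧
          Integrable (fun x => Real.exp (T x)) ν ∧
          r = ∫ x, T x ∂μ - Real.log (∫ x, Real.exp (T x) ∂ν) } :=
      ⟨dvT μ ν n, dvT_measurable μ ν n, dvT_integrable μ ν n, exp_dvT_integrable μ ν n, rfl⟩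
    have h1 : ∫ x, dvT μ ν n x ∂μ - Real.log (∫ x, Real.exp (dvT μ ν n x) ∂ν) ≤ b := hb hmem
    have h2 : Real.log (∫ x, Real.exp (dvT μ ν n x) ∂ν) ≤ Real.log 2 :=
      Real.log_le_log (integral_exp_pos (exp_dvT_integrable μ ν n)) (integral_exp_dvT_le μ ν h n)
    have h3 : ∫ x, (min (max (llr μ ν x) 0) (n : ℝ) - max (-llr μ ν x) 0) ∂μ
        ≤ ∫ x, dvT μ ν n x ∂μ := by
      refine integral_mono_ae ((dv_min_pos_integrable n).sub (dv_integrable_neg_part h))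
        (dvT_integrable μ ν n) ?_
      filter_upwards [Measure.rnDeriv_pos h, h.ae_le (Measure.rnDeriv_lt_top μ ν)]
        with x hpos hlt
      have hf : 0 < (μ.rnDeriv ν x).toReal := ENNReal.toReal_pos hpos.ne' hlt.ne
      have hid : min (max (llr μ ν x) 0) (n : ℝ) - max (-llr μ ν x) 0 = min (llr μ ν x) n := by
        rcases le_total (llr μ ν x) 0 with hc | hc
        · rw [max_eq_right hc, max_eq_left (by linarith), min_eq_left n.cast_nonneg,
            min_eq_left (hc.trans n.cast_nonneg)]
          ring
        · rw [max_eq_left hc, max_eq_right (by linarith)]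
          ring
      rw [hid]
      refine min_le_min ?_ le_rfl
      exact Real.log_le_log hf (by have := Real.exp_pos (-(n : ℝ)); linarith)
    rw [integral_sub (dv_min_pos_integrable n) (dv_integrable_neg_part h)] at h3
    linarith
  have hlsup : (⨆ n : ℕ, ∫⁻ x, ENNReal.ofReal (min (max (llr μ ν x) 0) n) ∂μ) = ∞ := by
    rw [dv_iSup_lintegral ((measurable_llr μ ν).max measurable_const)]
    exact dv_lintegral_pos_part_eq_top h h_int
  have hfin : ∀ n : ℕ,
      ∫⁻ x, ENNReal.ofReal (min (max (llr μ ν x) 0) n) ∂μ ≤ ENNReal.ofReal (b + Real.log 2 + C) := by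
    intro n
    have hne : ∫⁻ x, ENNReal.ofReal (min (max (llr μ ν x) 0) n) ∂μ ≠ ∞ := by
      refine ne_top_of_le_ne_top (b := ENNReal.ofReal n) ?_ ?_
      · simp
      · calc ∫⁻ x, ENNReal.ofReal (min (max (llr μ ν x) 0) n) ∂μ
            ≤ ∫⁻ _, ENNReal.ofReal n ∂μ :=
              lintegral_mono fun x => ENNReal.ofReal_le_ofReal (min_le_right _ _)
          _ = ENNReal.ofReal n := by simp
    have heq : ∫ x, min (max (llr μ ν x) 0) (n : ℝ) ∂μ
        = (∫⁻ x, ENNReal.ofReal (min (max (llr μ ν x) 0) n) ∂μ).toReal :=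
      integral_eq_lintegral_of_nonneg_ae
        (ae_of_all _ fun x => le_min (le_max_right _ _) n.cast_nonneg)
        (((measurable_llr μ ν).max measurable_const).min
          measurable_const).aestronglyMeasurable
    rw [← ENNReal.ofReal_toReal hne]
    exact ENNReal.ofReal_le_ofReal (by rw [← heq]; exact key n)
  have hsup_le := iSup_le hfin
  rw [hlsup] at hsup_le
  exact ENNReal.ofReal_ne_top (top_le_iff.1 hsup_le)

end DVAux

/-- KL divergence `∫ log (dP/dQ) dP`. -/
noncomputable def klDiv {Ω : Type*} [MeasurableSpace Ω] (P Q : Measure Ω) : ℝ :=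
  ∫ x, Real.log ((P.rnDeriv Q x).toReal) ∂P

/-- Donsker–Varadhan representation of the KL divergence. -/
theorem donsker_varadhan_representation {Ω : Type*} [MeasurableSpace Ω]
    (P Q : Measure Ω) [IsProbabilityMeasure P] [IsProbabilityMeasure Q]
    (hPQ : P ≪ Q) :
    klDiv P Q =
      sSup { r : ℝ | ∃ T : Ω → ℝ, Measurable T ∧ Integrable T P ∧
        Integrable (fun x => Real.exp (T x)) Q ∧
        r = ∫ x, T x ∂P - Real.log (∫ x, Real.exp (T x) ∂Q) } := by
  have hkl : klDiv P Q = ∫ x, llr P Q x ∂P := rfl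
  by_cases h_int : Integrable (llr P Q) P
  · have hS_ub : ∀ r ∈ { r : ℝ | ∃ T : Ω → ℝ, Measurable T ∧ Integrable T P ∧
        Integrable (fun x => Real.exp (T x)) Q ∧
        r = ∫ x, T x ∂P - Real.log (∫ x, Real.exp (T x) ∂Q) },
        r ≤ ∫ x, llr P Q x ∂P := by
      rintro r ⟨T, hTm, hT1, hT2, rfl⟩
      exact dv_le_klDiv hPQ h_int hT1 hT2
    have h_bdd : BddAbove { r : ℝ | ∃ T : Ω → ℝ, Measurable T ∧ Integrable T P ∧
        Integrable (fun x => Real.exp (T x)) Q ∧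
        r = ∫ x, T x ∂P - Real.log (∫ x, Real.exp (T x) ∂Q) } := ⟨_, hS_ub⟩
    have hS_ne : { r : ℝ | ∃ T : Ω → ℝ, Measurable T ∧ Integrable T P ∧
        Integrable (fun x => Real.exp (T x)) Q ∧
        r = ∫ x, T x ∂P - Real.log (∫ x, Real.exp (T x) ∂Q) }.Nonempty :=
      ⟨0, fun _ => 0, measurable_const, integrable_const 0,
        by simpa using integrable_const (1 : ℝ), by simp⟩
    rw [hkl]
    refine le_antisymm ?_ (csSup_le hS_ne hS_ub)
    have htend : Filter.Tendsto (fun n : ℕ =>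
        ∫ x, dvT P Q n x ∂P - Real.log (∫ x, Real.exp (dvT P Q n x) ∂Q)) Filter.atTop
        (nhds (∫ x, llr P Q x ∂P)) := by
      have h2 : Filter.Tendsto (fun n : ℕ => Real.log (∫ x, Real.exp (dvT P Q n x) ∂Q)) Filter.atTop
          (nhds (Real.log 1)) :=
        (Real.continuousAt_log one_ne_zero).tendsto.comp (dv_tendsto_integral_exp_dvT hPQ)
      have h3 := (dv_tendsto_integral_dvT hPQ h_int).sub h2
      simp only [Real.log_one, sub_zero] at h3
      exact h3
    refine le_of_tendsto htend (Filter.Eventually.of_forall fun n => ?_)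
    exact le_csSup h_bdd
      ⟨dvT P Q n, dvT_measurable P Q n, dvT_integrable P Q n, exp_dvT_integrable P Q n, rfl⟩
  · rw [hkl, integral_undef h_int, Real.sSup_of_not_bddAbove (dv_not_bddAbove hPQ h_int)]
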